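/- arXiv:1306.6457 — 3 statements merged into one kernel-verified Lean document; each statement's English description precedes it below -/
import Mathlib

section
/- For every complex number k with nonnegative imaginary part, every real x ≥ 0, and every α ∈ [0,1], one has |e^{2ikx} − 1| ≤ (2|k|x)^α · (1 + e^{−2 Im(k) x}). -/
open Complex Real

lemma aux_exp_sub_one (z : ℂ) (hz : z.re ≤ 0) :
    ‖Complex.exp z - 1‖ ≤ ‖z‖ := by
  have key : ∀ t ∈ Set.Icc (0:ℝ) 1, HasDerivWithinAt (fun t : ℝ => Complex.exp ((t:ℂ) * z))
      (z * Complex.exp ((t:ℂ) * z)) (Set.Icc (0:ℝ) 1) t := by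
    intro t ht
    have h1 : HasDerivAt (fun t : ℝ => (t:ℂ) * z) z t := by
      simpa using (Complex.ofRealCLM.hasDerivAt (x := t)).mul_const z
    simpa [mul_comm] using h1.cexp.hasDerivWithinAt
  have bound : ∀ t ∈ Set.Icc (0:ℝ) 1, ‖z * Complex.exp ((t:ℂ) * z)‖ ≤ ‖z‖ := by
    intro t ht
    rw [norm_mul, Complex.norm_exp]
    have : ((t:ℂ) * z).re ≤ 0 := by
      simp only [Complex.mul_re, Complex.ofReal_re, Complex.ofReal_im, zero_mul, sub_zero]
      exact mul_nonpos_of_nonneg_of_nonpos ht.1 hz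
    calc ‖z‖ * Real.exp ((↑t * z).re) ≤ ‖z‖ * 1 := by
          gcongr; exact Real.exp_le_one_iff.mpr this
      _ = ‖z‖ := by rw [mul_one]
  have := (convex_Icc (0:ℝ) 1).norm_image_sub_le_of_norm_hasDerivWithin_le key bound
    (Set.left_mem_Icc.mpr zero_le_one) (Set.right_mem_Icc.mpr zero_le_one)
  simpa using this

theorem stmt_0 (k : ℂ) (hk : 0 ≤ k.im) (x : ℝ) (hx : 0 ≤ x) (α : ℝ)
    (hα : α ∈ Set.Icc (0:ℝ) 1) :
    ‖Complex.exp (2 * Complex.I * k * x) - 1‖ ≤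
      (2 * ‖k‖ * x) ^ α * (1 + Real.exp (-2 * k.im * x)) := by
  obtain ⟨hα0, hα1⟩ := hα
  set z : ℂ := 2 * Complex.I * k * x with hzdef
  have hre : z.re = -2 * k.im * x := by
    simp [hzdef, Complex.mul_re, Complex.mul_im]
  have hre0 : z.re ≤ 0 := by
    rw [hre]
    have : 0 ≤ 2 * k.im * x := by positivity
    nlinarith
  have habs : ‖z‖ = 2 * ‖k‖ * x := by
    rw [hzdef, norm_mul, norm_mul, norm_mul, Complex.norm_real, Real.norm_eq_abs, _root_.abs_of_nonneg hx]
    simp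
  set a : ℝ := 2 * ‖k‖ * x with hadef
  have ha0 : 0 ≤ a := by positivity
  set b : ℝ := 1 + Real.exp (-2 * k.im * x) with hbdef
  have hb1 : 1 ≤ b := by
    rw [hbdef]; have := Real.exp_pos (-2 * k.im * x); linarith
  have hb0 : 0 ≤ b := le_trans zero_le_one hb1
  have bound1 : ‖Complex.exp z - 1‖ ≤ a := habs ▸ aux_exp_sub_one z hre0
  have bound2 : ‖Complex.exp z - 1‖ ≤ b := by
    calc ‖Complex.exp z - 1‖ ≤ ‖Complex.exp z‖ + 1 := by
          simpa using norm_sub_le (Complex.exp z) 1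
      _ = Real.exp z.re + 1 := by rw [Complex.norm_exp]
      _ = b := by rw [hre, hbdef]; ring
  rcases le_or_gt 1 a with h1 | h1
  · have : (1:ℝ) ≤ a ^ α := Real.one_le_rpow h1 hα0
    calc ‖Complex.exp z - 1‖ ≤ b := bound2
      _ = 1 * b := (one_mul b).symm
      _ ≤ a ^ α * b := by gcongr
  · rcases eq_or_lt_of_le ha0 with h0 | h0
    · have hz0 : z = 0 := by
        have : ‖z‖ = 0 := by rw [habs, ← h0]
        simpa using this
      rw [hz0]
      simp only [Complex.exp_zero, sub_self, norm_zero]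
      positivity
    · have haα : a ≤ a ^ α := by
        calc a = a ^ (1:ℝ) := (Real.rpow_one a).symm
          _ ≤ a ^ α := Real.rpow_le_rpow_of_exponent_ge h0 h1.le hα1
      calc ‖Complex.exp z - 1‖ ≤ a := bound1
        _ ≤ a ^ α := haα
        _ ≤ a ^ α * b := le_mul_of_one_le_right (by positivity) hb1
end

section
/- Let p : (0,∞) → ℝ be measurable with ∫_0^∞ r |p(r)| dr < ∞. Define A₀(z,w) = (1/2) ∫_{w/2}^{z/2} p(t) dt and recursively Aₙ(z,w) = (1/4) ∫_w^z ∫_0^w p((t+s)/2) A_{n−1}(t,s) ds dt for 0 ≤ w ≤ z. Then for all n ≥ 0, |Aₙ(z,w)| ≤ (1/(2 n!)) ∫_{w/2}^{(z+w)/2} |p(r)| dr · ( (1/2) ∫_0^w ∫_{s/2}^{(z+s)/2} |p(r)| dr ds )ⁿ. -/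
open MeasureTheory Real Set intervalIntegral

lemma stmt7_meas_param {g a b : ℝ → ℝ} (hg : Measurable g) (ha : Measurable a)
    (hb : Measurable b) : Measurable fun x => ∫ u in Ioc (a x) (b x), g u := by
  have h : ∀ x, (∫ u in Ioc (a x) (b x), g u)
      = ∫ u, (fun q : ℝ × ℝ => if a q.1 < q.2 ∧ q.2 ≤ b q.1 then g q.2 else 0) (x, u) := by
    intro x
    rw [← MeasureTheory.integral_indicator measurableSet_Ioc]
    congr 1 with u
    simp [Set.indicator_apply, Set.mem_Ioc]
  simp_rw [h]
  apply StronglyMeasurable.measurable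
  exact MeasureTheory.StronglyMeasurable.integral_prod_right'
    (ν := volume) (f := fun q : ℝ × ℝ => if a q.1 < q.2 ∧ q.2 ≤ b q.1 then g q.2 else 0) <| by
    apply Measurable.stronglyMeasurable
    refine Measurable.ite ?_ (hg.comp measurable_snd) measurable_const
    exact ((measurableSet_lt (ha.comp measurable_fst) measurable_snd).inter
      (measurableSet_le measurable_snd (hb.comp measurable_fst)))

lemma stmt7_simplex {g : ℝ → ℝ} (hg : Measurable g) (hg0 : ∀ x, 0 ≤ g x) {w : ℝ}
    (hgint : IntegrableOn g (Ioc 0 w)) (n : ℕ) :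
    ∀ v, v ≤ w → (∫ s in Ioc 0 v, g s * (∫ u in Ioc 0 s, g u) ^ n)
      = (∫ u in Ioc 0 v, g u) ^ (n + 1) / ((n : ℝ) + 1) := by
  set γ : ℝ → ℝ := fun x => ∫ u in Ioc 0 x, g u with hγdef
  have hγmeas : Measurable γ := stmt7_meas_param hg measurable_const measurable_id
  have hγ0 : ∀ x, 0 ≤ γ x := fun x => setIntegral_nonneg measurableSet_Ioc fun u _ => hg0 u
  have hmono : ∀ {x y : ℝ}, x ≤ y → y ≤ w → γ x ≤ γ y := by
    intro x y hxy hyw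
    exact setIntegral_mono_set (hgint.mono_set (Ioc_subset_Ioc_right hyw))
      (ae_of_all _ fun u => hg0 u) (HasSubset.Subset.eventuallyLE (Ioc_subset_Ioc_right hxy))
  have hJint : ∀ (m : ℕ) {v : ℝ}, v ≤ w → IntegrableOn (fun u => g u * γ u ^ m) (Ioc 0 v) := by
    intro m v hvw
    have hgv : IntegrableOn g (Ioc 0 v) := hgint.mono_set (Ioc_subset_Ioc_right hvw)
    refine Integrable.mono' (hgv.mul_const (γ w ^ m))
      ((hg.mul (hγmeas.pow_const m)).aestronglyMeasurable.restrict) ?_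
    rw [ae_restrict_iff' measurableSet_Ioc]
    filter_upwards with u hu
    have h1 : γ u ≤ γ w := hmono (hu.2.trans hvw) le_rfl
    rw [Real.norm_eq_abs, abs_of_nonneg (mul_nonneg (hg0 u) (pow_nonneg (hγ0 u) m))]
    exact mul_le_mul_of_nonneg_left (pow_le_pow_left₀ (hγ0 u) h1 m) (hg0 u)
  induction n with
  | zero => intro v hv; simp [hγdef]
  | succ n IH =>
    intro v hvw
    have hgv : IntegrableOn g (Ioc 0 v) := hgint.mono_set (Ioc_subset_Ioc_right hvw)
    have hsplit : ∀ u, 0 < u → u ≤ v → (∫ s in Ioc u v, g s) = γ v - γ u := by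
      intro u h0u huv
      have h1 : Ioc 0 u ∪ Ioc u v = Ioc 0 v := Ioc_union_Ioc_eq_Ioc h0u.le huv
      have h2 := setIntegral_union (f := g) (μ := volume) (Ioc_disjoint_Ioc_of_le le_rfl)
        measurableSet_Ioc (hgv.mono_set (Ioc_subset_Ioc_right huv))
        (hgv.mono_set (Ioc_subset_Ioc_left h0u.le))
      rw [h1] at h2
      simp only [hγdef]
      linarith
    set f : ℝ × ℝ → ℝ := fun q => if q.2 ≤ q.1 then g q.1 * (g q.2 * γ q.2 ^ n) else 0
      with hfdef
    have hfmeas : Measurable f := by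
      refine Measurable.ite (measurableSet_le measurable_snd measurable_fst) ?_ measurable_const
      exact (hg.comp measurable_fst).mul
        ((hg.comp measurable_snd).mul ((hγmeas.comp measurable_snd).pow_const n))
    have hfint : Integrable f ((volume.restrict (Ioc 0 v)).prod (volume.restrict (Ioc 0 v))) := by
      refine Integrable.mono' (hgv.mul_prod (hgv.mul_const (γ w ^ n)))
        hfmeas.aestronglyMeasurable ?_
      rw [Measure.prod_restrict, ae_restrict_iff' (measurableSet_Ioc.prod measurableSet_Ioc)]
      filter_upwards with q hq
      obtain ⟨hq1, hq2⟩ := hq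
      by_cases h : q.2 ≤ q.1
      · simp only [hfdef, if_pos h, Real.norm_eq_abs]
        rw [abs_of_nonneg (mul_nonneg (hg0 _) (mul_nonneg (hg0 _) (pow_nonneg (hγ0 _) n)))]
        have : γ q.2 ^ n ≤ γ w ^ n :=
          pow_le_pow_left₀ (hγ0 _) (hmono (hq2.2.trans hvw) le_rfl) n
        exact mul_le_mul_of_nonneg_left
          (mul_le_mul_of_nonneg_left this (hg0 _)) (hg0 _)
      · simp only [hfdef, if_neg h, norm_zero]
        exact mul_nonneg (hg0 _) (mul_nonneg (hg0 _) (pow_nonneg (hγ0 _) n))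
    have hswap : (∫ s in Ioc 0 v, ∫ u in Ioc 0 s, g s * (g u * γ u ^ n))
        = ∫ u in Ioc 0 v, (g u * γ u ^ n) * (γ v - γ u) := by
      have hL : (∫ s in Ioc 0 v, ∫ u in Ioc 0 v, f (s, u))
          = ∫ s in Ioc 0 v, ∫ u in Ioc 0 s, g s * (g u * γ u ^ n) := by
        refine setIntegral_congr_fun measurableSet_Ioc fun s hs => ?_
        have e1 : ∀ u, f (s, u) = (Iic s).indicator (fun u => g s * (g u * γ u ^ n)) u := by
          intro u; simp [hfdef, Set.indicator_apply, Set.mem_Iic]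
        simp_rw [e1]
        have e3 : Iic s ∩ Ioc 0 v = Ioc 0 s := by
          ext u
          simp only [Set.mem_inter_iff, Set.mem_Iic, Set.mem_Ioc]
          exact ⟨fun h => ⟨h.2.1, h.1⟩, fun h => ⟨h.2, h.1, h.2.trans hs.2⟩⟩
        rw [MeasureTheory.integral_indicator measurableSet_Iic,
          Measure.restrict_restrict measurableSet_Iic, e3]
      have hR : (∫ u in Ioc 0 v, ∫ s in Ioc 0 v, f (s, u))
          = ∫ u in Ioc 0 v, (g u * γ u ^ n) * (γ v - γ u) := by
        refine setIntegral_congr_fun measurableSet_Ioc fun u hu => ?_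
        have e1 : ∀ s, f (s, u) = (Ici u).indicator (fun s => g s * (g u * γ u ^ n)) s := by
          intro s; simp [hfdef, Set.indicator_apply, Set.mem_Ici]
        simp_rw [e1]
        rw [MeasureTheory.integral_indicator measurableSet_Ici,
          Measure.restrict_restrict measurableSet_Ici]
        have e2 : Ici u ∩ Ioc 0 v = Icc u v := by
          ext s
          simp only [Set.mem_inter_iff, Set.mem_Ici, Set.mem_Ioc, Set.mem_Icc]
          exact ⟨fun h => ⟨h.1, h.2.2⟩, fun h => ⟨h.1, hu.1.trans_le h.1, h.2⟩⟩
        rw [e2, MeasureTheory.integral_Icc_eq_integral_Ioc, MeasureTheory.integral_mul_const,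
          hsplit u hu.1 hu.2, mul_comm]
      rw [← hL, ← hR]
      exact MeasureTheory.integral_integral_swap hfint
    show (∫ s in Ioc 0 v, g s * γ s ^ (n + 1))
        = γ v ^ (n + 1 + 1) / ((n + 1 : ℕ) + 1 : ℝ)
    have step1 : (∫ s in Ioc 0 v, g s * γ s ^ (n + 1))
        = ((n : ℝ) + 1) * ∫ s in Ioc 0 v, ∫ u in Ioc 0 s, g s * (g u * γ u ^ n) := by
      rw [← MeasureTheory.integral_const_mul]
      refine setIntegral_congr_fun measurableSet_Ioc fun s hs => ?_
      have hIH := IH s (hs.2.trans hvw)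
      have hn1 : ((n : ℝ) + 1) ≠ 0 := by positivity
      rw [MeasureTheory.integral_const_mul, hIH]
      field_simp
      rfl
    have step3 : (∫ u in Ioc 0 v, (g u * γ u ^ n) * (γ v - γ u))
        = γ v * (∫ u in Ioc 0 v, g u * γ u ^ n) - ∫ u in Ioc 0 v, g u * γ u ^ (n + 1) := by
      have e : ∀ u, (g u * γ u ^ n) * (γ v - γ u)
          = γ v * (g u * γ u ^ n) - g u * γ u ^ (n + 1) := by intro u; ring
      simp_rw [e]
      rw [MeasureTheory.integral_sub ((hJint n hvw).const_mul (γ v)) (hJint (n + 1) hvw),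
        MeasureTheory.integral_const_mul]
    have hIHv : (∫ u in Ioc 0 v, g u * γ u ^ n) = γ v ^ (n + 1) / ((n : ℝ) + 1) :=
      IH v hvw
    have hn1 : ((n : ℝ) + 1) ≠ 0 := by positivity
    have key : (∫ s in Ioc 0 v, g s * γ s ^ (n + 1))
        = ((n : ℝ) + 1) * (γ v * ((γ v) ^ (n + 1) / ((n : ℝ) + 1))
            - ∫ s in Ioc 0 v, g s * γ s ^ (n + 1)) := by
      conv_lhs => rw [step1, hswap, step3]
      rw [hIHv]
    push_cast
    rw [eq_div_iff (by positivity : ((n : ℝ) + 1 + 1) ≠ 0)]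
    have expand : ((n : ℝ) + 1) * (γ v * ((γ v) ^ (n + 1) / ((n : ℝ) + 1)))
        = γ v ^ (n + 1 + 1) := by field_simp; ring
    nlinarith [key, expand]


noncomputable def stmt7F (p : ℝ → ℝ) (z s : ℝ) : ℝ := ∫ r in Ioc (s / 2) ((z + s) / 2), |p r|

noncomputable def stmt7G (p : ℝ → ℝ) (z x : ℝ) : ℝ := ∫ s in Ioc 0 x, stmt7F p z s

lemma stmt7_qint {p : ℝ → ℝ} (hpm : Measurable p)
    (hp : IntegrableOn (fun r => r * |p r|) (Ioi 0)) {a : ℝ} (b : ℝ) (ha : 0 < a) :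
    IntegrableOn (fun r => |p r|) (Ioc a b) := by
  refine Integrable.mono' ((hp.mono_set ?_).const_mul a⁻¹)
    hpm.abs.aestronglyMeasurable.restrict ?_
  · exact fun x hx => ha.trans hx.1
  · rw [ae_restrict_iff' measurableSet_Ioc]
    filter_upwards with x hx
    rw [Real.norm_eq_abs, abs_abs]
    have h1 : a * |p x| ≤ x * |p x| := mul_le_mul_of_nonneg_right hx.1.le (abs_nonneg _)
    calc |p x| = a⁻¹ * (a * |p x|) := by field_simp
    _ ≤ a⁻¹ * (x * |p x|) := by
        exact mul_le_mul_of_nonneg_left h1 (inv_nonneg.mpr ha.le)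

lemma stmt7F_nonneg (p : ℝ → ℝ) (z s : ℝ) : 0 ≤ stmt7F p z s :=
  setIntegral_nonneg measurableSet_Ioc fun r _ => abs_nonneg _

lemma stmt7G_nonneg (p : ℝ → ℝ) (z x : ℝ) : 0 ≤ stmt7G p z x :=
  setIntegral_nonneg measurableSet_Ioc fun s _ => stmt7F_nonneg p z s

lemma stmt7F_meas {p : ℝ → ℝ} (hpm : Measurable p) (z : ℝ) : Measurable (stmt7F p z) :=
  stmt7_meas_param hpm.abs (measurable_id.div_const 2)
    ((measurable_const.add measurable_id).div_const 2)

lemma stmt7G_meas {p : ℝ → ℝ} (hpm : Measurable p) (z : ℝ) : Measurable (stmt7G p z) :=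
  stmt7_meas_param (stmt7F_meas hpm z) measurable_const measurable_id

lemma stmt7F_mono {p : ℝ → ℝ} (hpm : Measurable p)
    (hp : IntegrableOn (fun r => r * |p r|) (Ioi 0)) {t z s : ℝ} (hs : 0 < s) (htz : t ≤ z) :
    stmt7F p t s ≤ stmt7F p z s := by
  refine setIntegral_mono_set (stmt7_qint hpm hp _ (by linarith)) ?_ ?_
  · exact ae_of_all _ fun r => abs_nonneg _
  · exact HasSubset.Subset.eventuallyLE (Ioc_subset_Ioc_right (by linarith))

lemma stmt7F_int {p : ℝ → ℝ} (hpm : Measurable p)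
    (hp : IntegrableOn (fun r => r * |p r|) (Ioi 0)) {z : ℝ} (hz : 0 ≤ z) (w : ℝ) :
    IntegrableOn (stmt7F p z) (Ioc 0 w) := by
  constructor
  · exact (stmt7F_meas hpm z).aestronglyMeasurable.restrict
  · rw [hasFiniteIntegral_iff_norm]
    have step1 : (∫⁻ s in Ioc 0 w, ENNReal.ofReal ‖stmt7F p z s‖)
        = ∫⁻ s in Ioc 0 w, ∫⁻ r,
            (Ioc (s / 2) ((z + s) / 2)).indicator (fun r => ENNReal.ofReal |p r|) r := by
      refine lintegral_congr_ae ((ae_restrict_iff' measurableSet_Ioc).mpr ?_)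
      filter_upwards with s hs
      rw [Real.norm_of_nonneg (stmt7F_nonneg p z s), stmt7F,
        ofReal_integral_eq_lintegral_ofReal (stmt7_qint hpm hp _ (half_pos hs.1))
          (ae_of_all _ fun r => abs_nonneg _),
        ← lintegral_indicator measurableSet_Ioc]
    have hjm : Measurable (fun q : ℝ × ℝ =>
        (Ioc (q.1 / 2) ((z + q.1) / 2)).indicator (fun r => ENNReal.ofReal |p r|) q.2) := by
      have he : (fun q : ℝ × ℝ =>
          (Ioc (q.1 / 2) ((z + q.1) / 2)).indicator (fun r => ENNReal.ofReal |p r|) q.2)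
          = fun q : ℝ × ℝ => if q.1 / 2 < q.2 ∧ q.2 ≤ (z + q.1) / 2
              then ENNReal.ofReal |p q.2| else 0 := by
        funext q; simp [Set.indicator_apply, Set.mem_Ioc]
      rw [he]
      refine Measurable.ite ?_
        (ENNReal.measurable_ofReal.comp (hpm.abs.comp measurable_snd)) measurable_const
      exact ((measurableSet_lt (measurable_fst.div_const 2) measurable_snd).inter
        (measurableSet_le measurable_snd ((measurable_const.add measurable_fst).div_const 2)))
    have step2 : (∫⁻ s in Ioc 0 w, ∫⁻ r,
          (Ioc (s / 2) ((z + s) / 2)).indicator (fun r => ENNReal.ofReal |p r|) r)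
        = ∫⁻ r, ∫⁻ s in Ioc 0 w,
            (Ioc (s / 2) ((z + s) / 2)).indicator (fun r => ENNReal.ofReal |p r|) r :=
      lintegral_lintegral_swap hjm.aemeasurable
    have step3 : ∀ r : ℝ, (∫⁻ s in Ioc 0 w,
          (Ioc (s / 2) ((z + s) / 2)).indicator (fun r => ENNReal.ofReal |p r|) r)
        ≤ ENNReal.ofReal |p r| * ENNReal.ofReal (2 * r) := by
      intro r
      have hb : ∀ s ∈ Ioc (0:ℝ) w,
          (Ioc (s / 2) ((z + s) / 2)).indicator (fun r => ENNReal.ofReal |p r|) r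
          ≤ (Ioo 0 (2 * r)).indicator (fun _ => ENNReal.ofReal |p r|) s := by
        intro s hs
        by_cases h : r ∈ Ioc (s / 2) ((z + s) / 2)
        · rw [Set.indicator_of_mem h, Set.indicator_of_mem (Set.mem_Ioo.mpr ⟨hs.1, by linarith [h.1]⟩)]
        · rw [Set.indicator_of_notMem h]; exact zero_le
      calc (∫⁻ s in Ioc 0 w,
            (Ioc (s / 2) ((z + s) / 2)).indicator (fun r => ENNReal.ofReal |p r|) r)
          ≤ ∫⁻ s in Ioc 0 w, (Ioo 0 (2 * r)).indicator (fun _ => ENNReal.ofReal |p r|) s := by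
            refine lintegral_mono_ae ?_
            rw [ae_restrict_iff' measurableSet_Ioc]
            exact ae_of_all _ hb
        _ ≤ ∫⁻ s, (Ioo 0 (2 * r)).indicator (fun _ => ENNReal.ofReal |p r|) s :=
            lintegral_mono' Measure.restrict_le_self le_rfl
        _ = ENNReal.ofReal |p r| * volume (Ioo 0 (2 * r)) := by
            rw [lintegral_indicator measurableSet_Ioo, setLIntegral_const]
        _ = ENNReal.ofReal |p r| * ENNReal.ofReal (2 * r) := by
            rw [Real.volume_Ioo, sub_zero]
    have step4 : (∫⁻ r : ℝ, ENNReal.ofReal |p r| * ENNReal.ofReal (2 * r)) < ⊤ := by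
      have hpt : ∀ r : ℝ, ENNReal.ofReal |p r| * ENNReal.ofReal (2 * r)
          = 2 * ((Ioi (0:ℝ)).indicator (fun r => ENNReal.ofReal (r * |p r|)) r) := by
        intro r
        by_cases h : (0:ℝ) < r
        · rw [Set.indicator_of_mem (Set.mem_Ioi.mpr h), ← ENNReal.ofReal_mul (abs_nonneg _),
            show |p r| * (2 * r) = 2 * (r * |p r|) by ring, ENNReal.ofReal_mul (by norm_num),
            ENNReal.ofReal_ofNat]
        · rw [show ENNReal.ofReal (2 * r) = 0 from
              ENNReal.ofReal_of_nonpos (by nlinarith [not_lt.mp h]), mul_zero,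
            Set.indicator_of_notMem (by simpa using h), mul_zero]
      simp_rw [hpt]
      rw [lintegral_const_mul' 2 _ (by norm_num), lintegral_indicator measurableSet_Ioi]
      have hfin : (∫⁻ r in Ioi (0:ℝ), ENNReal.ofReal (r * |p r|)) < ⊤ := by
        have h2 := hp.2
        rw [hasFiniteIntegral_iff_norm] at h2
        refine lt_of_le_of_lt
          (le_of_eq (lintegral_congr_ae ((ae_restrict_iff' measurableSet_Ioi).mpr ?_))) h2
        filter_upwards with r hr
        rw [Real.norm_of_nonneg (mul_nonneg (le_of_lt hr) (abs_nonneg _))]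
      exact ENNReal.mul_lt_top (by norm_num) hfin
    rw [step1, step2]
    exact lt_of_le_of_lt (lintegral_mono step3) step4

lemma stmt7F_interval (p : ℝ → ℝ) {t : ℝ} (ht : 0 ≤ t) (s : ℝ) :
    (∫ r in (s / 2)..((t + s) / 2), |p r|) = stmt7F p t s := by
  rw [intervalIntegral.integral_of_le (by linarith : s / 2 ≤ (t + s) / 2)]; rfl

lemma stmt7G_interval (p : ℝ → ℝ) {t : ℝ} (ht : 0 ≤ t) {x : ℝ} (hx : 0 ≤ x) :
    (∫ s in (0:ℝ)..x, ∫ r in (s / 2)..((t + s) / 2), |p r|) = stmt7G p t x := by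
  rw [intervalIntegral.integral_of_le hx]
  exact setIntegral_congr_fun measurableSet_Ioc fun s _ => stmt7F_interval p ht s

lemma stmt7G_mono_z {p : ℝ → ℝ} (hpm : Measurable p)
    (hp : IntegrableOn (fun r => r * |p r|) (Ioi 0)) {t z x : ℝ} (ht : 0 ≤ t) (htz : t ≤ z) :
    stmt7G p t x ≤ stmt7G p z x :=
  setIntegral_mono_on (stmt7F_int hpm hp ht x) (stmt7F_int hpm hp (ht.trans htz) x)
    measurableSet_Ioc fun s hs => stmt7F_mono hpm hp hs.1 htz

lemma stmt7G_mono_x {p : ℝ → ℝ} (hpm : Measurable p)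
    (hp : IntegrableOn (fun r => r * |p r|) (Ioi 0)) {z x y : ℝ} (hz : 0 ≤ z) (hxy : x ≤ y) :
    stmt7G p z x ≤ stmt7G p z y :=
  setIntegral_mono_set (stmt7F_int hpm hp hz y) (ae_of_all _ (stmt7F_nonneg p z))
    (HasSubset.Subset.eventuallyLE (Ioc_subset_Ioc_right hxy))

lemma stmt7_inner_t {p : ℝ → ℝ} (hpm : Measurable p)
    (hp : IntegrableOn (fun r => r * |p r|) (Ioi 0)) {w z s : ℝ}
    (h0w : 0 < w) (hwz : w ≤ z) (hs : s ∈ Ioc (0:ℝ) w) :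
    (∫⁻ t in Ioc w z, ENNReal.ofReal |p ((t + s) / 2)|)
      ≤ ENNReal.ofReal (2 * stmt7F p z w) := by
  have hint0 : IntervalIntegrable (fun r => |p r|) volume ((w + s) / 2) ((z + s) / 2) := by
    rw [intervalIntegrable_iff, uIoc_of_le (by linarith : (w + s) / 2 ≤ (z + s) / 2)]
    exact stmt7_qint hpm hp _ (by linarith [hs.1])
  have hci : IntegrableOn (fun t => |p ((t + s) / 2)|) (Ioc w z) := by
    have h1' : IntervalIntegrable (fun x => |p (x * 2⁻¹)|) volume
        ((w + s) / 2 / 2⁻¹) ((z + s) / 2 / 2⁻¹) := hint0.comp_mul_right (c := 2⁻¹)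
    rw [show (w + s) / 2 / 2⁻¹ = w + s by ring, show (z + s) / 2 / 2⁻¹ = z + s by ring] at h1'
    have h2' : IntervalIntegrable (fun t => |p ((t + s) * 2⁻¹)|) volume
        (w + s - s) (z + s - s) := h1'.comp_add_right s
    rw [show w + s - s = w by ring, show z + s - s = z by ring] at h2'
    have h3' : (fun t => |p ((t + s) * 2⁻¹)|) = fun t => |p ((t + s) / 2)| := by
      funext t; rw [← div_eq_mul_inv]
    rw [h3', intervalIntegrable_iff, uIoc_of_le hwz] at h2'
    exact h2'
  have hval : (∫ t in Ioc w z, |p ((t + s) / 2)|)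
      = 2 * ∫ r in Ioc ((w + s) / 2) ((z + s) / 2), |p r| := by
    rw [← intervalIntegral.integral_of_le hwz]
    calc (∫ t in w..z, |p ((t + s) / 2)|)
        = ∫ t in w..z, (fun x => |p (x / 2)|) (t + s) := rfl
      _ = ∫ x in (w + s)..(z + s), |p (x / 2)| :=
          intervalIntegral.integral_comp_add_right (fun x => |p (x / 2)|) s
      _ = (2:ℝ) • ∫ r in ((w + s) / 2)..((z + s) / 2), |p r| :=
          intervalIntegral.integral_comp_div (fun r => |p r|) two_ne_zero
      _ = 2 * ∫ r in Ioc ((w + s) / 2) ((z + s) / 2), |p r| := by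
          rw [smul_eq_mul, intervalIntegral.integral_of_le (by linarith : (w+s)/2 ≤ (z+s)/2)]
  have hmono2 : (∫ r in Ioc ((w + s) / 2) ((z + s) / 2), |p r|) ≤ stmt7F p z w := by
    refine setIntegral_mono_set (stmt7_qint hpm hp _ (half_pos h0w))
      (ae_of_all _ fun r => abs_nonneg _) ?_
    exact HasSubset.Subset.eventuallyLE
      (Ioc_subset_Ioc (by linarith [hs.1]) (by linarith [hs.2]))
  calc (∫⁻ t in Ioc w z, ENNReal.ofReal |p ((t + s) / 2)|)
      = ENNReal.ofReal (∫ t in Ioc w z, |p ((t + s) / 2)|) :=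
        (ofReal_integral_eq_lintegral_ofReal hci (ae_of_all _ fun t => abs_nonneg _)).symm
    _ ≤ ENNReal.ofReal (2 * stmt7F p z w) :=
        ENNReal.ofReal_le_ofReal (by rw [hval]; linarith)

lemma stmt7Phi_int {p : ℝ → ℝ} (hpm : Measurable p)
    (hp : IntegrableOn (fun r => r * |p r|) (Ioi 0)) {z : ℝ} (hz : 0 ≤ z) (w : ℝ) (n : ℕ) :
    IntegrableOn (fun s => stmt7F p z s * ((1 / 2) * stmt7G p z s) ^ n) (Ioc 0 w) := by
  refine Integrable.mono'
    ((stmt7F_int hpm hp hz w).mul_const (((1 / 2) * stmt7G p z w) ^ n)) ?_ ?_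
  · exact ((stmt7F_meas hpm z).mul
      ((measurable_const.mul (stmt7G_meas hpm z)).pow_const n)).aestronglyMeasurable.restrict
  · rw [ae_restrict_iff' measurableSet_Ioc]
    filter_upwards with s hs
    rw [Real.norm_eq_abs, abs_of_nonneg (mul_nonneg (stmt7F_nonneg p z s)
      (pow_nonneg (mul_nonneg (by norm_num) (stmt7G_nonneg p z s)) n))]
    refine mul_le_mul_of_nonneg_left
      (pow_le_pow_left₀ (mul_nonneg (by norm_num) (stmt7G_nonneg p z s))
        (mul_le_mul_of_nonneg_left (stmt7G_mono_x hpm hp hz hs.2) (by norm_num)) n)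
      (stmt7F_nonneg p z s)

theorem stmt_7 (p : ℝ → ℝ) (hpm : Measurable p)
    (hp : IntegrableOn (fun r => r * |p r|) (Ioi 0))
    (A : ℕ → ℝ → ℝ → ℝ)
    (h0 : ∀ z w : ℝ, A 0 z w = (1 / 2) * ∫ t in (w / 2)..(z / 2), p t)
    (hrec : ∀ n : ℕ, ∀ z w : ℝ, A (n + 1) z w =
      (1 / 4) * ∫ t in w..z, ∫ s in (0:ℝ)..w, p ((t + s) / 2) * A n t s) :
    ∀ n : ℕ, ∀ z w : ℝ, 0 ≤ w → w ≤ z →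
      |A n z w| ≤ (1 / (2 * n.factorial)) * (∫ r in (w / 2)..((z + w) / 2), |p r|) *
        ((1 / 2) * ∫ s in (0:ℝ)..w, ∫ r in (s / 2)..((z + s) / 2), |p r|) ^ n := by
  intro n
  induction n with
  | zero =>
    intro z w h0w hwz
    have hz : (0:ℝ) ≤ z := h0w.trans hwz
    have h1 : |A 0 z w| ≤ 1 / 2 * ∫ t in (w / 2)..(z / 2), |p t| := by
      rw [h0, abs_mul, abs_of_pos (by norm_num : (0:ℝ) < 1 / 2)]
      exact mul_le_mul_of_nonneg_left
        (intervalIntegral.abs_integral_le_integral_abs (by linarith)) (by norm_num)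
    have h2 : (∫ t in (w / 2)..(z / 2), |p t|) ≤ ∫ r in (w / 2)..((z + w) / 2), |p r| := by
      rw [intervalIntegral.integral_of_le (by linarith : w / 2 ≤ z / 2),
        intervalIntegral.integral_of_le (by linarith : w / 2 ≤ (z + w) / 2)]
      rcases eq_or_lt_of_le h0w with h | h
      · rw [← h]
        norm_num
      · refine setIntegral_mono_set (stmt7_qint hpm hp _ (by linarith))
          (ae_of_all _ fun r => abs_nonneg _)
          (HasSubset.Subset.eventuallyLE (Ioc_subset_Ioc_right (by linarith)))
    simp only [Nat.factorial_zero, Nat.cast_one, mul_one, pow_zero]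
    calc |A 0 z w| ≤ 1 / 2 * ∫ t in (w / 2)..(z / 2), |p t| := h1
      _ ≤ 1 / 2 * ∫ r in (w / 2)..((z + w) / 2), |p r| :=
          mul_le_mul_of_nonneg_left h2 (by norm_num)
  | succ n IH =>
    intro z w h0w hwz
    have hz : (0:ℝ) ≤ z := h0w.trans hwz
    rcases eq_or_lt_of_le h0w with hw0 | hw0
    · rw [hrec, ← hw0]
      simp [intervalIntegral.integral_same, zero_pow (Nat.succ_ne_zero n)]
    · -- 0 < w
      rw [stmt7F_interval p hz w, stmt7G_interval p hz h0w]
      have hF0 := stmt7F_nonneg p z w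
      have hG0 := stmt7G_nonneg p z w
      have hrhs0 : (0:ℝ) ≤ 1 / (2 * ((n + 1).factorial : ℝ)) * stmt7F p z w *
          ((1 / 2) * stmt7G p z w) ^ (n + 1) :=
        mul_nonneg (mul_nonneg (by positivity) hF0)
          (pow_nonneg (mul_nonneg (by norm_num) hG0) _)
      refine (ENNReal.ofReal_le_ofReal_iff hrhs0).mp ?_
      -- IH in F/G form
      have IH' : ∀ t s : ℝ, 0 < s → s ≤ w → w < t → t ≤ z →
          |A n t s| ≤ 1 / (2 * (n.factorial : ℝ)) *
            (stmt7F p z s * ((1 / 2) * stmt7G p z s) ^ n) := by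
        intro t s hs hsw hwt htz
        have h0t : (0:ℝ) ≤ t := by linarith
        have h1 := IH t s hs.le (by linarith)
        rw [stmt7F_interval p h0t s, stmt7G_interval p h0t hs.le] at h1
        have h2 : stmt7F p t s ≤ stmt7F p z s := stmt7F_mono hpm hp hs htz
        have h3 : stmt7G p t s ≤ stmt7G p z s := stmt7G_mono_z hpm hp h0t htz
        have hGts0 : (0:ℝ) ≤ (1 / 2) * stmt7G p t s :=
          mul_nonneg (by norm_num) (stmt7G_nonneg p t s)
        calc |A n t s| ≤ 1 / (2 * (n.factorial : ℝ)) * stmt7F p t s *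
              ((1 / 2) * stmt7G p t s) ^ n := h1
          _ ≤ 1 / (2 * (n.factorial : ℝ)) *
              (stmt7F p z s * ((1 / 2) * stmt7G p z s) ^ n) := by
            rw [mul_assoc]
            refine mul_le_mul_of_nonneg_left ?_ (by positivity)
            exact mul_le_mul h2
              (pow_le_pow_left₀ hGts0 (mul_le_mul_of_nonneg_left h3 (by norm_num)) n)
              (pow_nonneg hGts0 n) (stmt7F_nonneg p z s)
      have hAval : A (n + 1) z w
          = 1 / 4 * ∫ t in Ioc w z, ∫ s in Ioc 0 w, p ((t + s) / 2) * A n t s := by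
        rw [hrec, intervalIntegral.integral_of_le hwz]
        congr 1
        exact setIntegral_congr_fun measurableSet_Ioc
          fun t _ => intervalIntegral.integral_of_le h0w
      set c : ℝ := 1 / (2 * (n.factorial : ℝ)) with hc
      have hc0 : (0:ℝ) ≤ c := by positivity
      set Φ : ℝ → ℝ := fun s => stmt7F p z s * ((1 / 2) * stmt7G p z s) ^ n with hΦ
      have hΦ0 : ∀ s, 0 ≤ Φ s := fun s =>
        mul_nonneg (stmt7F_nonneg p z s)
          (pow_nonneg (mul_nonneg (by norm_num) (stmt7G_nonneg p z s)) n)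
      have hstep1 : ∀ t ∈ Ioc w z,
          (‖∫ s in Ioc 0 w, p ((t + s) / 2) * A n t s‖₊ : ENNReal)
          ≤ ∫⁻ s in Ioc 0 w,
              ENNReal.ofReal |p ((t + s) / 2)| * ENNReal.ofReal (c * Φ s) := by
        intro t ht
        refine le_trans (enorm_integral_le_lintegral_enorm _) ?_
        refine lintegral_mono_ae ((ae_restrict_iff' measurableSet_Ioc).mpr
          (ae_of_all _ fun s hs => ?_))
        calc (‖p ((t + s) / 2) * A n t s‖₊ : ENNReal)
            = ENNReal.ofReal |p ((t + s) / 2) * A n t s| := Real.enorm_eq_ofReal_abs _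
          _ = ENNReal.ofReal (|p ((t + s) / 2)| * |A n t s|) := by rw [abs_mul]
          _ = ENNReal.ofReal |p ((t + s) / 2)| * ENNReal.ofReal |A n t s| :=
              ENNReal.ofReal_mul (abs_nonneg _)
          _ ≤ ENNReal.ofReal |p ((t + s) / 2)| * ENNReal.ofReal (c * Φ s) :=
              mul_le_mul_right (ENNReal.ofReal_le_ofReal
                (IH' t s hs.1 hs.2 ht.1 ht.2)) _
      have hstep2 : ENNReal.ofReal |∫ t in Ioc w z, ∫ s in Ioc 0 w, p ((t + s) / 2) * A n t s|
          ≤ ∫⁻ t in Ioc w z, ∫⁻ s in Ioc 0 w,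
              ENNReal.ofReal |p ((t + s) / 2)| * ENNReal.ofReal (c * Φ s) := by
        rw [← Real.enorm_eq_ofReal_abs]
        refine le_trans (enorm_integral_le_lintegral_enorm _) ?_
        exact lintegral_mono_ae ((ae_restrict_iff' measurableSet_Ioc).mpr
          (ae_of_all _ hstep1))
      have hsplitc : ∀ t s : ℝ,
          ENNReal.ofReal |p ((t + s) / 2)| * ENNReal.ofReal (c * Φ s)
          = ENNReal.ofReal c *
            (ENNReal.ofReal |p ((t + s) / 2)| * ENNReal.ofReal (Φ s)) := by
        intro t s
        rw [ENNReal.ofReal_mul hc0]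
        ring
      have hmeasprod : AEMeasurable (fun q : ℝ × ℝ =>
          ENNReal.ofReal |p ((q.1 + q.2) / 2)| * ENNReal.ofReal (Φ q.2))
          ((volume.restrict (Ioc w z)).prod (volume.restrict (Ioc 0 w))) := by
        apply Measurable.aemeasurable
        refine Measurable.mul (f := fun q : ℝ × ℝ => ENNReal.ofReal |p ((q.1 + q.2) / 2)|)
          (g := fun q : ℝ × ℝ => ENNReal.ofReal (Φ q.2)) ?_ ?_
        · exact ENNReal.measurable_ofReal.comp
            ((hpm.abs).comp ((measurable_fst.add measurable_snd).div_const 2))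
        · exact ENNReal.measurable_ofReal.comp
            (((stmt7F_meas hpm z).mul
              ((measurable_const.mul (stmt7G_meas hpm z)).pow_const n)).comp measurable_snd)
      have hswap : (∫⁻ t in Ioc w z, ∫⁻ s in Ioc 0 w,
            ENNReal.ofReal |p ((t + s) / 2)| * ENNReal.ofReal (Φ s))
          = ∫⁻ s in Ioc 0 w, ∫⁻ t in Ioc w z,
              ENNReal.ofReal |p ((t + s) / 2)| * ENNReal.ofReal (Φ s) :=
        lintegral_lintegral_swap hmeasprod
      have hinner : ∀ s ∈ Ioc (0:ℝ) w,
          (∫⁻ t in Ioc w z, ENNReal.ofReal |p ((t + s) / 2)| * ENNReal.ofReal (Φ s))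
          ≤ ENNReal.ofReal (2 * stmt7F p z w) * ENNReal.ofReal (Φ s) := by
        intro s hs
        have he : ∀ t : ℝ, ENNReal.ofReal |p ((t + s) / 2)| * ENNReal.ofReal (Φ s)
            = ENNReal.ofReal (Φ s) * ENNReal.ofReal |p ((t + s) / 2)| :=
          fun t => mul_comm _ _
        simp_rw [he]
        rw [lintegral_const_mul' (ENNReal.ofReal (Φ s)) _ ENNReal.ofReal_ne_top]
        rw [mul_comm (ENNReal.ofReal (2 * stmt7F p z w)) _]
        exact mul_le_mul_right (stmt7_inner_t hpm hp hw0 hwz hs) _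
      have hΦint := stmt7Phi_int hpm hp hz w n
      have hΦlint : (∫⁻ s in Ioc 0 w, ENNReal.ofReal (Φ s))
          = ENNReal.ofReal (∫ s in Ioc 0 w, Φ s) :=
        (ofReal_integral_eq_lintegral_ofReal hΦint (ae_of_all _ hΦ0)).symm
      have hsimplex : (∫ s in Ioc 0 w, Φ s)
          = (1 / 2) ^ n * (stmt7G p z w ^ (n + 1) / ((n : ℝ) + 1)) := by
        have he : ∀ s : ℝ, Φ s = (1 / 2) ^ n * (stmt7F p z s * (stmt7G p z s) ^ n) := by
          intro s
          show stmt7F p z s * ((1 / 2) * stmt7G p z s) ^ n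
            = (1 / 2) ^ n * (stmt7F p z s * (stmt7G p z s) ^ n)
          rw [mul_pow]; ring
        simp_rw [he]
        rw [MeasureTheory.integral_const_mul]
        congr 1
        simp only [stmt7G]
        exact stmt7_simplex (stmt7F_meas hpm z) (stmt7F_nonneg p z)
          (stmt7F_int hpm hp hz w) n w le_rfl
      -- assemble
      calc ENNReal.ofReal |A (n + 1) z w|
          = ENNReal.ofReal (1 / 4) *
            ENNReal.ofReal |∫ t in Ioc w z, ∫ s in Ioc 0 w, p ((t + s) / 2) * A n t s| := by
            rw [hAval, abs_mul, abs_of_pos (by norm_num : (0:ℝ) < 1 / 4),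
              ENNReal.ofReal_mul (by norm_num)]
        _ ≤ ENNReal.ofReal (1 / 4) * ∫⁻ t in Ioc w z, ∫⁻ s in Ioc 0 w,
              ENNReal.ofReal |p ((t + s) / 2)| * ENNReal.ofReal (c * Φ s) :=
            mul_le_mul_right hstep2 _
        _ = ENNReal.ofReal (1 / 4) * (ENNReal.ofReal c *
              ∫⁻ t in Ioc w z, ∫⁻ s in Ioc 0 w,
                ENNReal.ofReal |p ((t + s) / 2)| * ENNReal.ofReal (Φ s)) := by
            simp_rw [hsplitc]
            rw [← lintegral_const_mul' (ENNReal.ofReal c) _ ENNReal.ofReal_ne_top]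
            congr 1
            refine lintegral_congr fun t => ?_
            rw [lintegral_const_mul' (ENNReal.ofReal c) _ ENNReal.ofReal_ne_top]
        _ = ENNReal.ofReal (1 / 4) * (ENNReal.ofReal c *
              ∫⁻ s in Ioc 0 w, ∫⁻ t in Ioc w z,
                ENNReal.ofReal |p ((t + s) / 2)| * ENNReal.ofReal (Φ s)) := by
            rw [hswap]
        _ ≤ ENNReal.ofReal (1 / 4) * (ENNReal.ofReal c *
              ∫⁻ s in Ioc 0 w, ENNReal.ofReal (2 * stmt7F p z w) * ENNReal.ofReal (Φ s)) := by
            refine mul_le_mul_right (mul_le_mul_right ?_ _) _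
            exact lintegral_mono_ae ((ae_restrict_iff' measurableSet_Ioc).mpr
              (ae_of_all _ hinner))
        _ = ENNReal.ofReal (1 / 4) * (ENNReal.ofReal c *
              (ENNReal.ofReal (2 * stmt7F p z w) * ENNReal.ofReal (∫ s in Ioc 0 w, Φ s))) := by
            rw [lintegral_const_mul' _ _ ENNReal.ofReal_ne_top, hΦlint]
        _ = ENNReal.ofReal (1 / (2 * ((n + 1).factorial : ℝ)) * stmt7F p z w *
              ((1 / 2) * stmt7G p z w) ^ (n + 1)) := by
            rw [hsimplex]
            rw [← ENNReal.ofReal_mul (by positivity : (0:ℝ) ≤ 2 * stmt7F p z w),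
              ← ENNReal.ofReal_mul hc0, ← ENNReal.ofReal_mul (by norm_num : (0:ℝ) ≤ 1/4)]
            congr 1
            have hfact : (((n + 1).factorial : ℕ) : ℝ) = ((n : ℝ) + 1) * (n.factorial : ℝ) := by
              rw [Nat.factorial_succ]; push_cast; ring
            have hfpos : (0:ℝ) < (n.factorial : ℝ) := by
              exact_mod_cast Nat.cast_pos.mpr n.factorial_pos
            have hn1 : ((n : ℝ) + 1) ≠ 0 := by positivity
            rw [hc, hfact]
            field_simp
            ring
end

section
/- Let q : (0,∞) → [0,∞) be measurable and e : [0,∞) → ℂ be a C² function satisfying Im(e''(x) · conj(e(x))) = q(x) |e(x)|² for all x ≥ 0, with e(x) → e^{ikx} asymptotics in the sense that Im(e'(x) conj(e(x))) → k as x → ∞ for a real k, and suppose e(0) = 0. Then k = ∫_0^∞ q(x) |e(x)|² dx ≥ 0, and k > 0 provided q > 0 on a set of positive measure where e ≠ 0. -/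
open MeasureTheory Real Set Complex

theorem stmt_17 (q : ℝ → ℝ) (hqm : Measurable q) (hqnn : ∀ x, 0 ≤ q x)
    (e : ℝ → ℂ) (he : ContDiff ℝ 2 e) (he0 : e 0 = 0) (k : ℝ)
    (heq : ∀ x : ℝ, 0 ≤ x →
      (deriv (deriv e) x * (starRingEnd ℂ) (e x)).im =
        q x * ‖e x‖ ^ 2)
    (hlim : Filter.Tendsto (fun x => (deriv e x * (starRingEnd ℂ) (e x)).im)
      Filter.atTop (nhds k)) :
    k = (∫ x in Ioi 0, q x * ‖e x‖ ^ 2) ∧ 0 ≤ k ∧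
      (0 < volume {x | x ∈ Ioi (0:ℝ) ∧ 0 < q x ∧ e x ≠ 0} → 0 < k) := by
  have h2 : ContDiff ℝ (1 + 1) e := by
    rw [show ((1:WithTop ℕ∞) + 1) = 2 from rfl]; exact he
  obtain ⟨hd, hd1⟩ := contDiff_succ_iff_deriv.mp h2
  have hde : ∀ x, HasDerivAt e (deriv e x) x := fun x =>
    (hd x).hasDerivAt
  have hdde : ∀ x, HasDerivAt (deriv e) (deriv (deriv e) x) x := fun x =>
    ((hd1.2.differentiable one_ne_zero) x).hasDerivAt
  set F : ℝ → ℝ := fun x => (deriv e x * (starRingEnd ℂ) (e x)).im with hF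
  set f' : ℝ → ℝ := fun x => (deriv (deriv e) x * (starRingEnd ℂ) (e x)).im with hf'
  have hFd : ∀ x, HasDerivAt F (f' x) x := by
    intro x
    have h1 : HasDerivAt (fun y => deriv e y * (starRingEnd ℂ) (e y))
        (deriv (deriv e) x * (starRingEnd ℂ) (e x)
          + deriv e x * (starRingEnd ℂ) (deriv e x)) x := by
      exact (hdde x).mul ((hde x).star)
    have h2 := Complex.imCLM.hasFDerivAt.comp_hasDerivAt x h1
    have him : (deriv e x * (starRingEnd ℂ) (deriv e x)).im = 0 := by
      simp [Complex.mul_conj]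
    simp only [Function.comp_def, Complex.imCLM_apply, Complex.add_im, him, add_zero] at h2
    exact h2
  have hcont : ContinuousWithinAt F (Ici 0) 0 :=
    (hFd 0).continuousAt.continuousWithinAt
  have hF0 : F 0 = 0 := by simp [hF, he0]
  have hnn : ∀ x ∈ Ioi (0:ℝ), 0 ≤ f' x := by
    intro x hx
    show 0 ≤ (deriv (deriv e) x * (starRingEnd ℂ) (e x)).im
    rw [heq x hx.out.le]
    exact mul_nonneg (hqnn x) (by positivity)
  have hint : IntegrableOn f' (Ioi 0) volume :=
    integrableOn_Ioi_deriv_of_nonneg hcont (fun x hx => hFd x) hnn hlim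
  have hintegral : (∫ x in Ioi 0, f' x) = k - F 0 :=
    integral_Ioi_of_hasDerivAt_of_tendsto hcont (fun x hx => hFd x) hint hlim
  have hcongr : (∫ x in Ioi 0, q x * ‖e x‖ ^ 2) = ∫ x in Ioi 0, f' x := by
    refine setIntegral_congr_fun measurableSet_Ioi fun x hx => ?_
    exact (heq x hx.out.le).symm
  have hk : k = ∫ x in Ioi 0, q x * ‖e x‖ ^ 2 := by
    rw [hcongr, hintegral, hF0, sub_zero]
  have hint' : IntegrableOn (fun x => q x * ‖e x‖ ^ 2) (Ioi 0) volume := by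
    refine hint.congr_fun (fun x hx => ?_) measurableSet_Ioi
    exact heq x hx.out.le
  refine ⟨hk, ?_, ?_⟩
  · rw [hk]
    exact setIntegral_nonneg measurableSet_Ioi
      (fun x _ => mul_nonneg (hqnn x) (by positivity))
  · intro hpos
    rw [hk]
    rw [setIntegral_pos_iff_support_of_nonneg_ae
      (Filter.Eventually.of_forall (fun x => mul_nonneg (hqnn x) (by positivity))) hint']
    refine lt_of_lt_of_le hpos (measure_mono ?_)
    rintro x ⟨hx1, hx2, hx3⟩
    refine ⟨?_, hx1⟩
    simp only [Function.mem_support]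
    exact ne_of_gt (mul_pos hx2 (pow_pos (norm_pos_iff.mpr hx3) 2))
end
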